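/- Let {A(t)}_{t≥0} be row-stochastic nonnegative M×M matrices satisfying: (1) all diagonal entries positive; (2) [A(t)]_{ij} > 0 iff [A(t)]_{ji} > 0; (3) there is δ > 0 lower-bounding every positive entry of every A(t). Then for any initial vector X(0) ∈ R^M, the sequence X(t+1) = A(t) X(t) converges as t → ∞. -/

import Mathlib

open Filter Topology Finset
set_option linter.unusedSectionVars false

section Lorenz

variable {ι : Type} [Fintype ι] [DecidableEq ι]

structure Hyp (A : ℕ → ι → ι → ℝ) (X : ℕ → ι → ℝ) (δ : ℝ) : Prop where
  nonneg : ∀ t i j, 0 ≤ A t i j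
  row : ∀ t i, ∑ j, A t i j = 1
  diag : ∀ t i, 0 < A t i i
  symm : ∀ t i j, 0 < A t i j ↔ 0 < A t j i
  pos : 0 < δ
  lb : ∀ t i j, 0 < A t i j → δ ≤ A t i j
  step : ∀ t i, X (t+1) i = ∑ j, A t i j * X t j

variable [Nonempty ι] {A : ℕ → ι → ι → ℝ} {X : ℕ → ι → ℝ} {δ : ℝ}

noncomputable def minv (X : ℕ → ι → ℝ) (t : ℕ) : ℝ := univ.inf' univ_nonempty (X t)
noncomputable def maxv (X : ℕ → ι → ℝ) (t : ℕ) : ℝ := univ.sup' univ_nonempty (X t)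
noncomputable def mstar (X : ℕ → ι → ℝ) : ℝ := ⨆ t, minv X t

lemma minv_le (t : ℕ) (i : ι) : minv X t ≤ X t i := inf'_le _ (mem_univ i)
lemma le_maxv (t : ℕ) (i : ι) : X t i ≤ maxv X t := le_sup' _ (mem_univ i)

lemma hdelta_le_one (h : Hyp A X δ) : δ ≤ 1 := by
  obtain ⟨i⟩ := (inferInstance : Nonempty ι)
  have h1 := h.lb 0 i i (h.diag 0 i)
  have h2 : A 0 i i ≤ ∑ j, A 0 i j :=
    Finset.single_le_sum (fun j _ => h.nonneg 0 i j) (mem_univ i)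
  rw [h.row 0 i] at h2; linarith

lemma step_ge (h : Hyp A X δ) (t : ℕ) (i : ι) : minv X t ≤ X (t+1) i := by
  rw [h.step t i]
  calc minv X t = ∑ j, A t i j * minv X t := by
        rw [← Finset.sum_mul, h.row t i, one_mul]
    _ ≤ ∑ j, A t i j * X t j :=
        Finset.sum_le_sum fun j _ => mul_le_mul_of_nonneg_left (minv_le t j) (h.nonneg t i j)

lemma step_le (h : Hyp A X δ) (t : ℕ) (i : ι) : X (t+1) i ≤ maxv X t := by
  rw [h.step t i]
  calc ∑ j, A t i j * X t j ≤ ∑ j, A t i j * maxv X t :=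
        Finset.sum_le_sum fun j _ => mul_le_mul_of_nonneg_left (le_maxv t j) (h.nonneg t i j)
    _ = maxv X t := by rw [← Finset.sum_mul, h.row t i, one_mul]

lemma minv_mono (h : Hyp A X δ) : Monotone (minv X) :=
  monotone_nat_of_le_succ fun t => le_inf' _ _ fun i _ => step_ge h t i

lemma maxv_anti (h : Hyp A X δ) : Antitone (maxv X) :=
  antitone_nat_of_succ_le fun t => sup'_le _ _ fun i _ => step_le h t i

lemma minv_bdd (h : Hyp A X δ) : BddAbove (Set.range (minv X)) := by
  refine ⟨maxv X 0, ?_⟩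
  rintro x ⟨t, rfl⟩
  obtain ⟨i⟩ := (inferInstance : Nonempty ι)
  calc minv X t ≤ X t i := minv_le t i
    _ ≤ maxv X t := le_maxv t i
    _ ≤ maxv X 0 := maxv_anti h (Nat.zero_le t)

lemma tendsto_minv (h : Hyp A X δ) : Tendsto (minv X) atTop (𝓝 (mstar X)) :=
  tendsto_atTop_ciSup (minv_mono h) (minv_bdd h)

lemma minv_le_mstar (h : Hyp A X δ) (t : ℕ) : minv X t ≤ mstar X :=
  le_ciSup (minv_bdd h) t

/-- lower bound on one step via a single entry -/
lemma pair_lb (h : Hyp A X δ) (t : ℕ) (i j : ι) :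
    A t i j * (X t j - minv X t) ≤ X (t+1) i - minv X t := by
  have key : X (t+1) i - minv X t = ∑ l, A t i l * (X t l - minv X t) := by
    rw [h.step t i]
    simp only [mul_sub]
    rw [Finset.sum_sub_distrib, ← Finset.sum_mul, h.row t i, one_mul]
  rw [key]
  refine Finset.single_le_sum (f := fun l => A t i l * (X t l - minv X t))
    (fun l _ => mul_nonneg (h.nonneg t i l) (sub_nonneg.2 (minv_le t l))) (mem_univ j)

/-- if row i is supported in W, next value is ≤ sup over W -/
lemma supp_ub (h : Hyp A X δ) (t : ℕ) (i : ι) (W : Finset ι) (hW : W.Nonempty)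
    (h0 : ∀ j, j ∉ W → A t i j = 0) : X (t+1) i ≤ W.sup' hW (X t) := by
  rw [h.step t i]
  have hsum : ∑ j ∈ W, A t i j = 1 := by
    rw [← h.row t i]
    exact Finset.sum_subset (subset_univ W) (fun x _ hx => h0 x hx)
  have : ∑ j, A t i j * X t j = ∑ j ∈ W, A t i j * X t j :=
    (Finset.sum_subset (subset_univ W) (fun x _ hx => by rw [h0 x hx, zero_mul])).symm
  rw [this]
  calc ∑ j ∈ W, A t i j * X t j ≤ ∑ j ∈ W, A t i j * W.sup' hW (X t) :=
        Finset.sum_le_sum fun j hj =>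
          mul_le_mul_of_nonneg_left (le_sup' _ hj) (h.nonneg t i j)
    _ = W.sup' hW (X t) := by rw [← Finset.sum_mul, hsum, one_mul]

/-- if all entries in the support of row j have value ≥ b, then next value ≥ b -/
lemma supp_lb (h : Hyp A X δ) (t : ℕ) (j : ι) (b : ℝ)
    (hb : ∀ l, 0 < A t j l → b ≤ X t l) : b ≤ X (t+1) j := by
  rw [h.step t j]
  calc b = ∑ l, A t j l * b := by rw [← Finset.sum_mul, h.row t j, one_mul]
    _ ≤ ∑ l, A t j l * X t l := by
        refine Finset.sum_le_sum fun l _ => ?_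
        rcases (h.nonneg t j l).eq_or_lt with heq | hlt
        · rw [← heq]; simp
        · exact mul_le_mul_of_nonneg_left (hb l hlt) (h.nonneg t j l)


section Core
variable {ι : Type} [Fintype ι] [DecidableEq ι] [Nonempty ι]
variable {A : ℕ → ι → ι → ℝ} {X : ℕ → ι → ℝ} {δ : ℝ}

lemma core (h : Hyp A X δ) (ε : ℝ) (hε : 0 < ε) :
    ∃ (W : Finset ι) (t0 : ℕ), W.Nonempty ∧
      (∀ t, t0 ≤ t → ∀ i ∈ W, ∀ j, j ∉ W → A t i j = 0) ∧
      (∀ t, t0 ≤ t → ∀ i ∈ W, |X t i - mstar X| < (2/δ)^(Fintype.card ι + 1) * ε) := by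
  classical
  set n := Fintype.card ι with hn
  have hδ0 := h.pos
  have hδ1 := hdelta_le_one h
  have h2δ : 1 ≤ 2/δ := by rw [le_div_iff₀ hδ0]; linarith
  set pw : ℕ → ℝ := fun s => (2/δ)^s with hpw
  have pw1 : ∀ s, 1 ≤ pw s := fun s => one_le_pow₀ h2δ
  have pwmono : ∀ s s', s ≤ s' → pw s ≤ pw s' := fun s s' hss => pow_le_pow_right₀ h2δ hss
  set θ : ℕ → ℝ := fun s => mstar X + (pw s - 1) * ε with hθ
  have θmono : ∀ ⦃s s' : ℕ⦄, s ≤ s' → θ s ≤ θ s' := by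
    intro s s' hss
    have := pwmono s s' hss
    simp only [hθ]
    nlinarith
  set Q : ℕ → ℕ → Finset ι := fun s t => univ.filter (fun i => X t i < θ s) with hQdef
  set q : ℕ → ℕ → ℕ := fun s t => (Q s t).card with hqdef
  have memQ : ∀ s t i, i ∈ Q s t ↔ X t i < θ s := by intro s t i; simp [hQdef]
  have Qsub : ∀ s t, Q s t ⊆ Q (s+1) t := by
    intro s t i hi
    rw [memQ] at hi ⊢
    exact lt_of_lt_of_le hi (θmono (Nat.le_succ s))
  have hT1 : ∀ᶠ t in atTop, mstar X - ε < minv X t :=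
    (tendsto_minv h).eventually (eventually_gt_nhds (by linarith))
  -- key threshold inequality
  have key : ∀ (s t : ℕ), mstar X - ε < minv X t →
      θ s ≤ minv X t + δ * (θ (s+1) - minv X t) := by
    intro s t hm
    have e2 : δ * pw (s+1) = 2 * pw s := by
      simp only [hpw, pow_succ]
      field_simp
    have hmm : minv X t ≤ mstar X := minv_le_mstar h t
    have hprod : (1-δ) * (mstar X - ε) ≤ (1-δ) * minv X t :=
      mul_le_mul_of_nonneg_left hm.le (by linarith)
    simp only [hθ]
    have e3 : δ * (pw (s+1) * ε) = 2 * (pw s * ε) := by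
      rw [← mul_assoc, e2]; ring
    nlinarith [pw1 s]
  -- backward lemma
  have F1' : ∀ s t i, mstar X - ε < minv X t → X (t+1) i < θ s →
      ∀ j, 0 < A t i j → X t j < θ (s+1) := by
    intro s t i hm hi j hA
    by_contra hcon
    push_neg at hcon
    have hXj : 0 ≤ X t j - minv X t := sub_nonneg.2 (minv_le t j)
    have h1 : δ * (X t j - minv X t) ≤ A t i j * (X t j - minv X t) :=
      mul_le_mul_of_nonneg_right (h.lb t i j hA) hXj
    have h2 := pair_lb h t i j
    have hk := key s t hm
    have c1 : δ * (θ (s+1) - minv X t) ≤ δ * (X t j - minv X t) := by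
      apply mul_le_mul_of_nonneg_left _ hδ0.le
      linarith
    linarith
  -- kick lemma
  have K : ∀ s t i j, mstar X - ε < minv X t → 0 < A t i j → θ (s+1) ≤ X t j →
      θ s ≤ X (t+1) i := by
    intro s t i j hm hA hj
    have hXj : 0 ≤ X t j - minv X t := sub_nonneg.2 (minv_le t j)
    have h1 : δ * (X t j - minv X t) ≤ A t i j * (X t j - minv X t) :=
      mul_le_mul_of_nonneg_right (h.lb t i j hA) hXj
    have h2 := pair_lb h t i j
    have hk := key s t hm
    have c1 : δ * (θ (s+1) - minv X t) ≤ δ * (X t j - minv X t) := by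
      apply mul_le_mul_of_nonneg_left _ hδ0.le
      linarith
    linarith
  have hqle : ∀ s t, q s t ≤ n := by
    intro s t
    calc q s t ≤ (univ : Finset ι).card := card_filter_le _ _
      _ = n := by rw [card_univ]
  have hq1 : ∀ s t, 1 ≤ q (s+1) t := by
    intro s t
    obtain ⟨i, -, hieq⟩ := exists_mem_eq_inf' (univ_nonempty : (univ : Finset ι).Nonempty) (X t)
    refine card_pos.2 ⟨i, ?_⟩
    rw [memQ]
    have hX1 : X t i = minv X t := hieq.symm
    have hle : minv X t ≤ mstar X := minv_le_mstar h t
    have hpow : (2:ℝ) ≤ pw (s+1) := by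
      have h21 : (2:ℝ) ≤ 2/δ := by rw [le_div_iff₀ hδ0]; linarith
      calc (2:ℝ) ≤ 2/δ := h21
        _ = pw 1 := by simp [hpw]
        _ ≤ pw (s+1) := pwmono 1 (s+1) (by omega)
    have : mstar X < θ (s+1) := by
      simp only [hθ]
      nlinarith
    linarith
  -- frequently machinery
  have hSne : ∀ s, {c : ℕ | ∃ᶠ t in atTop, q s t = c}.Nonempty := by
    intro s
    by_contra hcon
    rw [Set.not_nonempty_iff_eq_empty] at hcon
    have hall : ∀ c : ℕ, ∀ᶠ t in atTop, q s t ≠ c := by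
      intro c
      have : ¬ ∃ᶠ t in atTop, q s t = c := by
        intro hf
        have : c ∈ {c : ℕ | ∃ᶠ t in atTop, q s t = c} := hf
        rw [hcon] at this
        exact this
      exact Filter.not_frequently.mp this
    have hbig : ∀ᶠ t in atTop, ∀ c ∈ Finset.range (n+1), q s t ≠ c :=
      (Filter.eventually_all_finset _).2 fun c _ => hall c
    obtain ⟨t, ht⟩ := hbig.exists
    exact ht (q s t) (Finset.mem_range.2 (Nat.lt_succ_of_le (hqle s t))) rfl
  set lam : ℕ → ℕ := fun s => sInf {c | ∃ᶠ t in atTop, q s t = c} with hlam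
  have hfreq : ∀ s, ∃ᶠ t in atTop, q s t = lam s := fun s => Nat.sInf_mem (hSne s)
  have hev : ∀ s, ∀ᶠ t in atTop, lam s ≤ q s t := by
    intro s
    have hbig : ∀ᶠ t in atTop, ∀ c ∈ Finset.range (lam s), q s t ≠ c := by
      refine (Filter.eventually_all_finset _).2 fun c hc => ?_
      rw [Finset.mem_range] at hc
      have hnot : c ∉ {c : ℕ | ∃ᶠ t in atTop, q s t = c} := fun hmem => by
        have h1 := Nat.sInf_le hmem
        have h2 : lam s = sInf {c : ℕ | ∃ᶠ t in atTop, q s t = c} := rfl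
        omega
      exact Filter.not_frequently.mp hnot
    filter_upwards [hbig] with t ht
    by_contra hlt
    push_neg at hlt
    exact ht (q s t) (Finset.mem_range.2 hlt) rfl
  have lam_le_n : ∀ s, lam s ≤ n := by
    intro s
    obtain ⟨t, ht⟩ := (hfreq s).exists
    rw [← ht]; exact hqle s t
  have lam_ge_1 : ∀ s, 1 ≤ lam (s+1) := by
    intro s
    obtain ⟨t, ht⟩ := (hfreq (s+1)).exists
    rw [← ht]; exact hq1 s t
  have lam_mono : ∀ s, lam s ≤ lam (s+1) := by
    intro s
    obtain ⟨N, hN⟩ := eventually_atTop.1 ((hev s).and hT1)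
    obtain ⟨t, htN, hteq⟩ := frequently_atTop.1 (hfreq (s+1)) N
    have hsub : Q s (t+1) ⊆ Q (s+1) t := by
      intro i hi
      rw [memQ] at hi ⊢
      exact F1' s t i (hN t htN).2 hi i (h.diag t i)
    calc lam s ≤ q s (t+1) := (hN (t+1) (by omega)).1
      _ ≤ q (s+1) t := card_le_card hsub
      _ = lam (s+1) := hteq
  have hpig : ∃ r, r ≤ n ∧ lam r = lam (r+1) := by
    by_contra hcon
    push_neg at hcon
    have hstrict : ∀ r, r ≤ n → lam r + 1 ≤ lam (r+1) := fun r hr =>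
      Nat.succ_le_of_lt (lt_of_le_of_ne (lam_mono r) (hcon r hr))
    have hind : ∀ s, s ≤ n+1 → s ≤ lam s := by
      intro s
      induction s with
      | zero => exact fun _ => Nat.zero_le _
      | succ s ih =>
        intro hs
        have h1 := hstrict s (by omega)
        have h2 := ih (by omega)
        omega
    have h1 := hind (n+1) le_rfl
    have h2 := lam_le_n (n+1)
    omega
  obtain ⟨r, hrn, hrEq⟩ := hpig
  have hc1 : 1 ≤ lam (r+1) := lam_ge_1 r
  obtain ⟨N, hN⟩ := eventually_atTop.1 (hT1.and ((hev r).and (hev (r+1))))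
  obtain ⟨t0, ht0N, ht0⟩ := frequently_atTop.1 (hfreq (r+1)) N
  set W := Q r t0 with hWdef
  have hWr1 : Q (r+1) t0 = W := by
    have hle : q (r+1) t0 ≤ q r t0 := by
      rw [ht0, ← hrEq]
      exact (hN t0 ht0N).2.1
    exact (eq_of_subset_of_card_le (Qsub r t0) hle).symm
  have hWcard : W.card = lam (r+1) := by
    rw [← hWr1]
    exact ht0
  have hWne : W.Nonempty := card_pos.1 (by omega)
  have noCross : ∀ t, N ≤ t → Q r t = W → Q (r+1) t = W →
      ∀ i ∈ W, ∀ j, j ∉ W → A t i j = 0 := by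
    intro t htN h1 h2 i hi j hj
    by_contra hne
    have hpos : 0 < A t i j := lt_of_le_of_ne (h.nonneg t i j) (Ne.symm hne)
    have hm := (hN t htN).1
    have hjθ : θ (r+1) ≤ X t j := by
      rw [← h2] at hj
      rw [memQ] at hj
      exact not_lt.1 hj
    have hkick : θ r ≤ X (t+1) i := K r t i j hm hpos hjθ
    have hiQ : i ∉ Q r (t+1) := by
      rw [memQ]; exact not_lt.2 hkick
    have hsub : Q r (t+1) ⊆ W.erase i := by
      intro x hx
      rw [Finset.mem_erase]
      refine ⟨fun hxi => hiQ (hxi ▸ hx), ?_⟩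
      rw [← h2]
      rw [memQ] at hx ⊢
      exact F1' r t x hm hx x (h.diag t x)
    have hcard : q r (t+1) ≤ lam (r+1) - 1 := by
      calc q r (t+1) ≤ (W.erase i).card := card_le_card hsub
        _ = lam (r+1) - 1 := by rw [card_erase_of_mem hi, hWcard]
    have hge : lam r ≤ q r (t+1) := (hN (t+1) (by omega)).2.1
    rw [hrEq] at hge
    omega
  have FR : ∀ t, t0 ≤ t → Q r t = W ∧ Q (r+1) t = W := by
    intro t ht
    induction t, ht using Nat.le_induction with
    | base => exact ⟨rfl, hWr1⟩
    | succ t ht ih =>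
      obtain ⟨h1, h2⟩ := ih
      have htN : N ≤ t := le_trans ht0N ht
      have hm := (hN t htN).1
      have hNC := noCross t htN h1 h2
      have hsub1 : Q r (t+1) ⊆ W := by
        intro x hx
        rw [← h2]
        rw [memQ] at hx ⊢
        exact F1' r t x hm hx x (h.diag t x)
      have hsup : W ⊆ Q r (t+1) := by
        intro i hi
        rw [memQ]
        have hub := supp_ub h t i W hWne (fun j hj => hNC i hi j hj)
        have hlt : W.sup' hWne (X t) < θ r := by
          rw [Finset.sup'_lt_iff]
          intro l hl
          have : l ∈ Q r t := h1.symm ▸ hl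
          rwa [memQ] at this
        linarith
      have hQ1 : Q r (t+1) = W := subset_antisymm hsub1 hsup
      refine ⟨hQ1, subset_antisymm ?_ ?_⟩
      · intro j hj
        by_contra hjW
        have hjlt : X (t+1) j < θ (r+1) := by rwa [memQ] at hj
        have hex : ∃ l, 0 < A t j l ∧ X t l < θ (r+1) := by
          by_contra hcc
          push_neg at hcc
          have : θ (r+1) ≤ X (t+1) j := supp_lb h t j _ (fun l hl => hcc l hl)
          linarith
        obtain ⟨l, hAl, hXl⟩ := hex
        have hlW : l ∈ W := by
          rw [← h2]; rw [memQ]; exact hXl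
        have hzero := hNC l hlW j hjW
        have hpos : 0 < A t l j := (h.symm t j l).1 hAl
        linarith
      · intro x hx
        exact Qsub r (t+1) (hQ1.symm ▸ hx)
  refine ⟨W, t0, hWne, ?_, ?_⟩
  · intro t ht i hi j hj
    exact noCross t (le_trans ht0N ht) (FR t ht).1 (FR t ht).2 i hi j hj
  · intro t ht i hi
    have h1 := (FR t ht).1
    have hiQ : i ∈ Q r t := h1.symm ▸ hi
    rw [memQ] at hiQ
    have hlow : mstar X - ε < X t i :=
      lt_of_lt_of_le (hN t (le_trans ht0N ht)).1 (minv_le t i)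
    have hupp : X t i < θ (n+1) := lt_of_lt_of_le hiQ (θmono (by omega))
    have hpweq : ((2:ℝ)/δ)^(n+1) = pw (n+1) := rfl
    rw [abs_sub_lt_iff]
    have hp := pw1 (n+1)
    simp only [hθ] at hupp
    constructor
    · rw [hpweq]; nlinarith
    · rw [hpweq]; nlinarith

end Core


theorem auxmain : ∀ (n : ℕ) (ι : Type) [Fintype ι] [DecidableEq ι]
    (A : ℕ → ι → ι → ℝ) (X : ℕ → ι → ℝ) (δ : ℝ),
    Fintype.card ι ≤ n → Hyp A X δ → ∃ L, Tendsto X atTop (𝓝 L) := by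
  intro n
  induction n using Nat.strong_induction_on with
  | _ n IH =>
  intro ι _ _ A X δ hcard h
  by_cases hempty : IsEmpty ι
  · exact ⟨fun i => hempty.elim i, tendsto_pi_nhds.2 fun i => (hempty.elim i)⟩
  have hnonemp : Nonempty ι := not_isEmpty_iff.mp hempty
  have hδ0 := h.pos
  by_cases hsplit : ∃ (W : Finset ι) (t0 : ℕ), W.Nonempty ∧ W ≠ univ ∧
      ∀ t, t0 ≤ t → ∀ i ∈ W, ∀ j, j ∉ W → A t i j = 0
  · obtain ⟨W, t0, hWne, hWuniv, hiso⟩ := hsplit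
    have hiso2 : ∀ t, t0 ≤ t → ∀ j, j ∉ W → ∀ i ∈ W, A t j i = 0 := by
      intro t ht j hj i hi
      by_contra hcon
      have hpos : 0 < A t j i := lt_of_le_of_ne (h.nonneg t j i) (Ne.symm hcon)
      have h2 := (h.symm t j i).1 hpos
      rw [hiso t ht i hi j hj] at h2
      exact lt_irrefl 0 h2
    have hWlt : W.card < Fintype.card ι := by
      have hss : W ⊂ univ := Finset.ssubset_univ_iff.2 hWuniv
      have := Finset.card_lt_card hss
      rwa [card_univ] at this
    -- subsystem on W
    have hres1 : ∃ L1 : ↥W → ℝ,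
        Tendsto (fun t (i : ↥W) => X (t0 + t) i.1) atTop (𝓝 L1) := by
      refine IH W.card (lt_of_lt_of_le hWlt hcard) ↥W
        (fun t (i j : ↥W) => A (t0 + t) i.1 j.1) (fun t (i : ↥W) => X (t0 + t) i.1) δ
        (le_of_eq (Fintype.card_coe W)) ?_
      refine ⟨fun t i j => h.nonneg _ _ _, ?_, fun t i => h.diag _ _,
        fun t i j => h.symm _ _ _, h.pos, fun t i j => h.lb _ _ _, ?_⟩
      · intro t i
        rw [Finset.sum_coe_sort W (fun j => A (t0+t) i.1 j)]
        rw [Finset.sum_subset (subset_univ W)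
          (fun x _ hx => hiso (t0+t) (Nat.le_add_right _ _) i.1 i.2 x hx)]
        exact h.row _ _
      · intro t i
        show X ((t0 + t) + 1) i.1 = _
        rw [h.step (t0+t) i.1]
        rw [Finset.sum_coe_sort W (fun j => A (t0+t) i.1 j * X (t0+t) j)]
        exact (Finset.sum_subset (subset_univ W) (fun x _ hx => by
          rw [hiso (t0+t) (Nat.le_add_right _ _) i.1 i.2 x hx, zero_mul])).symm
    -- subsystem on Wᶜ
    have hres2 : ∃ L2 : ↥(Wᶜ) → ℝ,
        Tendsto (fun t (i : ↥(Wᶜ)) => X (t0 + t) i.1) atTop (𝓝 L2) := by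
      have hcc : Wᶜ.card < n := by
        have h1 : 1 ≤ W.card := hWne.card_pos
        have h2 : Wᶜ.card = Fintype.card ι - W.card := Finset.card_compl W
        omega
      refine IH Wᶜ.card hcc ↥(Wᶜ)
        (fun t (i j : ↥(Wᶜ)) => A (t0 + t) i.1 j.1) (fun t (i : ↥(Wᶜ)) => X (t0 + t) i.1) δ
        (le_of_eq (Fintype.card_coe Wᶜ)) ?_
      have hz : ∀ t (i : ↥(Wᶜ)) x, x ∉ Wᶜ → A (t0+t) i.1 x = 0 := by
        intro t i x hx
        have hxW : x ∈ W := by simpa using hx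
        exact hiso2 (t0+t) (Nat.le_add_right _ _) i.1 (Finset.mem_compl.1 i.2) x hxW
      refine ⟨fun t i j => h.nonneg _ _ _, ?_, fun t i => h.diag _ _,
        fun t i j => h.symm _ _ _, h.pos, fun t i j => h.lb _ _ _, ?_⟩
      · intro t i
        rw [Finset.sum_coe_sort Wᶜ (fun j => A (t0+t) i.1 j)]
        rw [Finset.sum_subset (subset_univ Wᶜ) (fun x _ hx => hz t i x hx)]
        exact h.row _ _
      · intro t i
        show X ((t0 + t) + 1) i.1 = _
        rw [h.step (t0+t) i.1]
        rw [Finset.sum_coe_sort Wᶜ (fun j => A (t0+t) i.1 j * X (t0+t) j)]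
        exact (Finset.sum_subset (subset_univ Wᶜ) (fun x _ hx => by
          rw [hz t i x hx, zero_mul])).symm
    obtain ⟨L1, hL1⟩ := hres1
    obtain ⟨L2, hL2⟩ := hres2
    refine ⟨fun i => if hi : i ∈ W then L1 ⟨i, hi⟩ else L2 ⟨i, Finset.mem_compl.2 hi⟩, ?_⟩
    rw [tendsto_pi_nhds]
    intro i
    by_cases hi : i ∈ W
    · simp only [dif_pos hi]
      have hc := tendsto_pi_nhds.1 hL1 ⟨i, hi⟩
      have heq : (fun t => X (t0 + t) (⟨i, hi⟩ : ↥W).1) = fun t => X (t + t0) i := by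
        funext t; rw [Nat.add_comm]
      rw [heq] at hc
      exact (tendsto_add_atTop_iff_nat t0).1 hc
    · simp only [dif_neg hi]
      have hc := tendsto_pi_nhds.1 hL2 ⟨i, Finset.mem_compl.2 hi⟩
      have heq : (fun t => X (t0 + t) (⟨i, Finset.mem_compl.2 hi⟩ : ↥(Wᶜ)).1)
          = fun t => X (t + t0) i := by
        funext t; rw [Nat.add_comm]
      rw [heq] at hc
      exact (tendsto_add_atTop_iff_nat t0).1 hc
  · refine ⟨fun _ => mstar X, ?_⟩
    rw [tendsto_pi_nhds]
    intro i
    rw [Metric.tendsto_atTop]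
    intro ε' hε'
    have hCpos : (0:ℝ) < (2/δ)^(Fintype.card ι + 1) := by positivity
    obtain ⟨W, t0, hWne, hiso, hbd⟩ :=
      core h (ε'/(2*(2/δ)^(Fintype.card ι + 1))) (by positivity)
    have hWuniv : W = univ := by
      by_contra hne2
      exact hsplit ⟨W, t0, hWne, hne2, hiso⟩
    refine ⟨t0, fun t ht => ?_⟩
    have hb := hbd t ht i (hWuniv.symm ▸ mem_univ i)
    rw [Real.dist_eq]
    have heq : (2/δ)^(Fintype.card ι + 1) * (ε'/(2*(2/δ)^(Fintype.card ι + 1))) = ε'/2 := by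
      field_simp
    rw [heq] at hb
    linarith

end Lorenz

theorem stmt12 (M : ℕ) (A : ℕ → Matrix (Fin M) (Fin M) ℝ)
    (hnonneg : ∀ t i j, 0 ≤ A t i j)
    (hrow : ∀ t i, ∑ j, A t i j = 1)
    (hdiag : ∀ t i, 0 < A t i i)
    (hsymm : ∀ t i j, 0 < A t i j ↔ 0 < A t j i)
    (δ : ℝ) (hδ : 0 < δ)
    (hlb : ∀ t i j, 0 < A t i j → δ ≤ A t i j)
    (X : ℕ → Fin M → ℝ)
    (hX : ∀ t, X (t + 1) = (A t).mulVec (X t)) :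
    ∃ L : Fin M → ℝ, Tendsto X atTop (𝓝 L) := by
  have hyp : Hyp (fun t i j => A t i j) X δ := by
    refine ⟨hnonneg, hrow, hdiag, hsymm, hδ, hlb, ?_⟩
    intro t i
    rw [hX t]
    simp [Matrix.mulVec, dotProduct]
  exact auxmain M (Fin M) (fun t i j => A t i j) X δ (le_of_eq (Fintype.card_fin M)) hyp
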